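/- Let f(x) = x/(e^x - 1) + x/2 in ℚ[s,t][[x]], and set A(s,t,x) = (f(x) - f(sx))·f(tx)/t. Then A(s,t,x) + A(t,s,x) = (x²/4)·{ 1 + 4e^x(e^{(s+t-1)x} - 1)/((e^x-1)(e^{sx}-1)(e^{tx}-1)) - (s+t-1)·(e^{sx}+1)(e^{tx}+1)/((e^{sx}-1)(e^{tx}-1)) }. -/

import Mathlib

open PowerSeries

noncomputable section

/-- The field `ℚ(s,t)` of rational functions in two variables `s = X 0`, `t = X 1`. -/
abbrev Frac2 : Type := FractionRing (MvPolynomial (Fin 2) ℚ)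

/-- The image of `s` in `ℚ(s,t)`. -/
def sF : Frac2 := algebraMap (MvPolynomial (Fin 2) ℚ) Frac2 (MvPolynomial.X 0)

/-- The image of `t` in `ℚ(s,t)`. -/
def tF : Frac2 := algebraMap (MvPolynomial (Fin 2) ℚ) Frac2 (MvPolynomial.X 1)

/-- Purely algebraic core of the identity, over an arbitrary commutative ring. -/
theorem aux_getzler {R : Type*} [CommRing R]
    (F Fs Ft E Es Et Er X cs ct cst si ti c4i : R)
    (h1 : F * (2 * (E - 1)) = X * (E + 1))
    (hs : Fs * (2 * (Es - 1)) = cs * X * (Es + 1))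
    (ht : Ft * (2 * (Et - 1)) = ct * X * (Et + 1))
    (hE : E * Er = Es * Et)
    (hsi : cs * si = 1) (hti : ct * ti = 1) (h4 : c4i * 4 = 1)
    (hcst : cst = cs + ct - 1) :
    ((F - Fs) * Ft * ti + (F - Ft) * Fs * si) * ((E - 1) * (Es - 1) * (Et - 1))
      = c4i * X ^ 2 * ((E - 1) * (Es - 1) * (Et - 1) + 4 * E * (Er - 1)
          - cst * (Es + 1) * (Et + 1) * (E - 1)) := by
  subst hcst
  have key : 4 * cs * (F - Fs) * Ft * ((E - 1) * (Es - 1) * (Et - 1))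
        + 4 * ct * (F - Ft) * Fs * ((E - 1) * (Es - 1) * (Et - 1))
      = cs * ct * X ^ 2 * ((E - 1) * (Es - 1) * (Et - 1) + 4 * E * (Er - 1)
          - (cs + ct - 1) * (Es + 1) * (Et + 1) * (E - 1)) := by
    linear_combination (cs * ct * X * (Et + 1) * (Es - 1)
        + cs * ct * X * (Es + 1) * (Et - 1)) * h1
      + (2 * ct * (F - Ft) * (E - 1) * (Et - 1) - cs * ct * X * (Et + 1) * (E - 1)) * hs
      + (2 * cs * (F - Fs) * (E - 1) * (Es - 1) - cs * ct * X * (Es + 1) * (E - 1)) * ht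
      + (-(4 * cs * ct * X ^ 2)) * hE
  linear_combination si * ti * c4i * key
    + (-(4 * c4i * ti * (F - Fs) * Ft * ((E - 1) * (Es - 1) * (Et - 1)))
        + c4i * X ^ 2 * ((E - 1) * (Es - 1) * (Et - 1) + 4 * E * (Er - 1)
          - (cs + ct - 1) * (Es + 1) * (Et + 1) * (E - 1))) * hsi
    + (-(4 * c4i * si * (F - Ft) * Fs * ((E - 1) * (Es - 1) * (Et - 1)))
        + c4i * X ^ 2 * ((E - 1) * (Es - 1) * (Et - 1) + 4 * E * (Er - 1)
          - (cs + ct - 1) * (Es + 1) * (Et + 1) * (E - 1)) * cs * si) * hti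
    + (-(ti * (F - Fs) * Ft * ((E - 1) * (Es - 1) * (Et - 1)))
        - si * (F - Ft) * Fs * ((E - 1) * (Es - 1) * (Et - 1))) * h4

set_option maxHeartbeats 1000000 in
theorem stmt_6 (f : PowerSeries ℚ)
    (hf : f * (2 * (PowerSeries.exp ℚ - 1)) = PowerSeries.X * (PowerSeries.exp ℚ + 1)) :
    (((PowerSeries.map (algebraMap ℚ Frac2) f
        - PowerSeries.rescale sF (PowerSeries.map (algebraMap ℚ Frac2) f))
          * PowerSeries.rescale tF (PowerSeries.map (algebraMap ℚ Frac2) f)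
          * PowerSeries.C tF⁻¹
      + (PowerSeries.map (algebraMap ℚ Frac2) f
        - PowerSeries.rescale tF (PowerSeries.map (algebraMap ℚ Frac2) f))
          * PowerSeries.rescale sF (PowerSeries.map (algebraMap ℚ Frac2) f)
          * PowerSeries.C sF⁻¹)
      * ((PowerSeries.exp Frac2 - 1) * (PowerSeries.rescale sF (PowerSeries.exp Frac2) - 1)
          * (PowerSeries.rescale tF (PowerSeries.exp Frac2) - 1)))
    = PowerSeries.C (4 : Frac2)⁻¹ * PowerSeries.X ^ 2 *
      (((PowerSeries.exp Frac2 - 1) * (PowerSeries.rescale sF (PowerSeries.exp Frac2) - 1)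
          * (PowerSeries.rescale tF (PowerSeries.exp Frac2) - 1))
        + 4 * PowerSeries.exp Frac2
            * (PowerSeries.rescale (sF + tF - 1) (PowerSeries.exp Frac2) - 1)
        - PowerSeries.C (sF + tF - 1)
            * (PowerSeries.rescale sF (PowerSeries.exp Frac2) + 1)
            * (PowerSeries.rescale tF (PowerSeries.exp Frac2) + 1)
            * (PowerSeries.exp Frac2 - 1)) := by
  set σ := algebraMap ℚ Frac2
  set F := PowerSeries.map σ f with hF
  set E := PowerSeries.exp Frac2 with hEdef
  -- s and t are nonzero in the fraction field
  have hs0 : sF ≠ 0 := by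
    simp only [sF, ne_eq, IsFractionRing.to_map_eq_zero_iff]
    exact MvPolynomial.X_ne_zero 0
  have ht0 : tF ≠ 0 := by
    simp only [tF, ne_eq, IsFractionRing.to_map_eq_zero_iff]
    exact MvPolynomial.X_ne_zero 1
  -- basic functional equation, transported to Frac2
  have h1 : F * (2 * (E - 1)) = PowerSeries.X * (E + 1) := by
    have := congrArg (PowerSeries.map σ) hf
    simpa [map_mul, map_sub, map_add, map_one, map_ofNat] using this
  -- rescaled versions
  have hs : PowerSeries.rescale sF F * (2 * (PowerSeries.rescale sF E - 1))
      = PowerSeries.C sF * PowerSeries.X * (PowerSeries.rescale sF E + 1) := by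
    have := congrArg (PowerSeries.rescale sF) h1
    simpa [map_mul, map_sub, map_add, map_one, map_ofNat, rescale_X] using this
  have ht : PowerSeries.rescale tF F * (2 * (PowerSeries.rescale tF E - 1))
      = PowerSeries.C tF * PowerSeries.X * (PowerSeries.rescale tF E + 1) := by
    have := congrArg (PowerSeries.rescale tF) h1
    simpa [map_mul, map_sub, map_add, map_one, map_ofNat, rescale_X] using this
  -- exponential addition
  have hE : E * PowerSeries.rescale (sF + tF - 1) E
      = PowerSeries.rescale sF E * PowerSeries.rescale tF E := by
    have a := PowerSeries.exp_mul_exp_eq_exp_add (1 : Frac2) (sF + tF - 1)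
    have b := PowerSeries.exp_mul_exp_eq_exp_add sF tF
    simp only [PowerSeries.rescale_one, RingHom.id_apply] at a
    have h' : (1 : Frac2) + (sF + tF - 1) = sF + tF := by ring
    rw [h'] at a
    rw [hEdef, a, ← b]
  have hsi : PowerSeries.C sF * PowerSeries.C sF⁻¹ = 1 := by
    rw [← map_mul, mul_inv_cancel₀ hs0, map_one]
  have hti : PowerSeries.C tF * PowerSeries.C tF⁻¹ = 1 := by
    rw [← map_mul, mul_inv_cancel₀ ht0, map_one]
  have h4 : PowerSeries.C (4 : Frac2)⁻¹ * 4 = 1 := by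
    have : (4 : PowerSeries Frac2) = PowerSeries.C 4 := by
      simp [map_ofNat]
    rw [this, ← map_mul, inv_mul_cancel₀ (by norm_num : (4 : Frac2) ≠ 0), map_one]
  have hcst : PowerSeries.C (sF + tF - 1)
      = PowerSeries.C sF + PowerSeries.C tF - 1 := by
    rw [map_sub, map_add, map_one]
  exact aux_getzler F (PowerSeries.rescale sF F) (PowerSeries.rescale tF F)
    E (PowerSeries.rescale sF E) (PowerSeries.rescale tF E)
    (PowerSeries.rescale (sF + tF - 1) E) PowerSeries.X
    (PowerSeries.C sF) (PowerSeries.C tF)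
    (PowerSeries.C (sF + tF - 1))
    (PowerSeries.C sF⁻¹) (PowerSeries.C tF⁻¹)
    (PowerSeries.C (4 : Frac2)⁻¹)
    h1 hs ht hE hsi hti h4 hcst
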